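/- For any field K and n ∈ ℕ, d(K, n, 4) > (3−√5)/2 · n², i.e., if d ≤ (3−√5)/2 · n² then every quadratic K-algebra with n generators and d quadratic relations has nonzero fourth graded component. -/

import Mathlib

open TensorProduct

namespace GS

variable (K : Type*) [Field K] (V : Type*) [AddCommGroup V] [Module K V]

/-- The tensor product of two subspaces, as a subspace of the tensor product. -/
noncomputable def tsub {M N : Type*} [AddCommGroup M] [Module K M] [AddCommGroup N] [Module K N]
    (A : Submodule K M) (B : Submodule K N) : Submodule K (M ⊗[K] N) :=
  LinearMap.range (TensorProduct.map A.subtype B.subtype)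

/-- `V ≃ V^{⊗1}`. -/
noncomputable def pow1 : V ≃ₗ[K] ⨂[K]^1 V :=
  (PiTensorProduct.subsingletonEquiv (R := K) (s := fun _ : Fin 1 => V) (0 : Fin 1)).symm

/-- `V ⊗ V ≃ V^{⊗2}`. -/
noncomputable def pow2 : (V ⊗[K] V) ≃ₗ[K] ⨂[K]^2 V :=
  (TensorProduct.congr (pow1 K V) (pow1 K V)).trans
    ((TensorPower.mulEquiv (n := 1) (m := 1)).trans (TensorPower.cast K V (by norm_num)))

/-- The subspace `V^{⊗a} ⊗ L ⊗ V^{⊗b}` of `V^{⊗(a+(2+b))}`. -/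
noncomputable def segAux (a b : ℕ) (L : Submodule K (V ⊗[K] V)) :
    Submodule K (⨂[K]^(a + (2 + b)) V) :=
  Submodule.map (TensorPower.mulEquiv (n := a) (m := 2 + b)).toLinearMap
    (tsub K (⊤ : Submodule K (⨂[K]^a V))
      (Submodule.map (TensorPower.mulEquiv (n := 2) (m := b)).toLinearMap
        (tsub K (L.map (pow2 K V).toLinearMap) (⊤ : Submodule K (⨂[K]^b V)))))

/-- For `j : Fin (q-1)`, the subspace `V^{⊗j} ⊗ L ⊗ V^{⊗(q-2-j)}` of `V^{⊗q}`
(the `(j+1)`-st shift of `L`). -/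
noncomputable def shiftSub (q : ℕ) (L : Submodule K (V ⊗[K] V)) (j : Fin (q - 1)) :
    Submodule K (⨂[K]^q V) :=
  Submodule.map (TensorPower.cast K V (by have := j.2; omega : (j : ℕ) + (2 + (q - 2 - j)) = q)).toLinearMap
    (segAux K V j (q - 2 - j) L)

/-- `E_q(L,V) = ⋂_{j=1}^{q-1} V^{⊗(j-1)} ⊗ L ⊗ V^{⊗(q-1-j)} ⊆ V^{⊗q}`. -/
noncomputable def Eint (q : ℕ) (L : Submodule K (V ⊗[K] V)) : Submodule K (⨂[K]^q V) :=
  ⨅ j : Fin (q - 1), shiftSub K V q L j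

/-- The degree-`q` component of the two-sided ideal generated by the subspace
`M ⊆ V ⊗ V` of quadratic relations: the sum of all shifts `V^{⊗(j-1)} ⊗ M ⊗ V^{⊗(q-1-j)}`. -/
noncomputable def idealComp (q : ℕ) (M : Submodule K (V ⊗[K] V)) : Submodule K (⨂[K]^q V) :=
  ⨆ j : Fin (q - 1), shiftSub K V q M j

/-- The dimension of the degree-`q` component of the quadratic algebra with space of
relations `M ⊆ V ⊗ V` (the quotient of `V^{⊗q}` by the degree-`q` component of the ideal). -/
noncomputable def quadDim (q : ℕ) (M : Submodule K (V ⊗[K] V)) : ℕ :=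
  Module.finrank K ((⨂[K]^q V) ⧸ idealComp K V q M)

/-- `h_q(K,n,d)`: the minimal dimension of the `q`-th graded component over all quadratic
`K`-algebras with `n` generators and `d` (linearly independent) quadratic relations. -/
noncomputable def hq (n d q : ℕ) : ℕ :=
  sInf { h | ∃ M : Submodule K ((Fin n → K) ⊗[K] (Fin n → K)),
      Module.finrank K M = d ∧ quadDim K (Fin n → K) q M = h }

end GS

open TensorProduct Module

namespace GSAux

variable (K : Type*) [Field K] (V : Type*) [AddCommGroup V] [Module K V]

open GS

variable {K}

lemma frk_map {M N : Type*} [AddCommGroup M] [Module K M] [AddCommGroup N] [Module K N]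
    (e : M ≃ₗ[K] N) (p : Submodule K M) : finrank K (p.map e.toLinearMap) = finrank K p := by
  have h : Submodule.map e.toLinearMap p = Submodule.map (e : M →ₗ[K] N) p := rfl
  rw [h, LinearEquiv.finrank_map_eq]

lemma tsub_mono {M N : Type*} [AddCommGroup M] [Module K M] [AddCommGroup N] [Module K N]
    {A A' : Submodule K M} {B B' : Submodule K N} (hA : A ≤ A') (hB : B ≤ B') :
    tsub K A B ≤ tsub K A' B' := by
  rw [tsub, tsub, TensorProduct.range_map_eq_span_tmul, TensorProduct.range_map_eq_span_tmul]
  refine Submodule.span_le.2 ?_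
  rintro x ⟨a, b, rfl⟩
  exact Submodule.subset_span ⟨⟨a, hA a.2⟩, ⟨b, hB b.2⟩, rfl⟩

lemma finrank_tsub_le {M N : Type*} [AddCommGroup M] [Module K M] [AddCommGroup N] [Module K N]
    [FiniteDimensional K M] [FiniteDimensional K N]
    (A : Submodule K M) (B : Submodule K N) :
    finrank K (tsub K A B) ≤ finrank K A * finrank K B := by
  have h := LinearMap.finrank_range_le (TensorProduct.map A.subtype B.subtype)
  rwa [Module.finrank_tensorProduct] at h

lemma finrank_tsub_eq {M N : Type*} [AddCommGroup M] [Module K M] [AddCommGroup N] [Module K N]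
    [FiniteDimensional K M] [FiniteDimensional K N]
    (A : Submodule K M) (B : Submodule K N) :
    finrank K (tsub K A B) = finrank K A * finrank K B := by
  have hinj : Function.Injective (TensorProduct.map A.subtype B.subtype) := by
    rw [← LinearMap.rTensor_comp_lTensor, LinearMap.coe_comp]
    exact (Module.Flat.rTensor_preserves_injective_linearMap _ A.injective_subtype).comp
      (Module.Flat.lTensor_preserves_injective_linearMap _ B.injective_subtype)
  rw [tsub, LinearMap.finrank_range_of_inj hinj, Module.finrank_tensorProduct]

variable [FiniteDimensional K V]

instance pow_finite (q : ℕ) : FiniteDimensional K (⨂[K]^q V) := by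
  induction q with
  | zero => exact Module.Finite.equiv (PiTensorProduct.isEmptyEquiv (Fin 0)).symm
  | succ q ih =>
    exact Module.Finite.equiv
      (((TensorProduct.congr (LinearEquiv.refl K (⨂[K]^q V)) (GS.pow1 K V)).trans
        (TensorPower.mulEquiv (n := q) (m := 1))) : (⨂[K]^q V) ⊗[K] V ≃ₗ[K] ⨂[K]^(q+1) V)

lemma finrank_pow (q : ℕ) : finrank K (⨂[K]^q V) = (finrank K V) ^ q := by
  induction q with
  | zero => rw [(PiTensorProduct.isEmptyEquiv (Fin 0)).finrank_eq, finrank_self, pow_zero]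
  | succ q ih =>
    have e : ((⨂[K]^q V) ⊗[K] V) ≃ₗ[K] ⨂[K]^(q+1) V :=
      (TensorProduct.congr (LinearEquiv.refl K (⨂[K]^q V)) (GS.pow1 K V)).trans
        (TensorPower.mulEquiv (n := q) (m := 1))
    rw [← e.finrank_eq, Module.finrank_tensorProduct, ih, pow_succ]

lemma finrank_shiftSub_le (q : ℕ) (M : Submodule K (V ⊗[K] V)) (j : Fin (q - 1)) :
    finrank K (shiftSub K V q M j) ≤
      (finrank K V) ^ (j : ℕ) * (finrank K M * (finrank K V) ^ (q - 2 - (j : ℕ))) := by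
  rw [shiftSub, frk_map, segAux, frk_map]
  refine (finrank_tsub_le _ _).trans ?_
  rw [finrank_top, finrank_pow]
  refine Nat.mul_le_mul_left _ ?_
  rw [frk_map]
  refine (finrank_tsub_le _ _).trans ?_
  rw [finrank_top, finrank_pow, frk_map]

end GSAux

namespace GSAux

open GS TensorProduct Module

variable {K : Type*} [Field K] {V : Type*} [AddCommGroup V] [Module K V]

local notation "ₜ1" => @GradedMonoid.GOne.one ℕ (fun i => ⨂[K]^i V) _ _
local infixl:70 " ₜ* " => @GradedMonoid.GMul.mul ℕ (fun i => ⨂[K]^i V) _ _ _ _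

noncomputable def TT (M : Submodule K (V ⊗[K] V)) : Submodule K (⨂[K]^4 V) :=
  Submodule.map (TensorPower.cast K V (by norm_num : 2 + 2 = 4)).toLinearMap
    (Submodule.map (TensorPower.mulEquiv (n := 2) (m := 2)).toLinearMap
      (tsub K (M.map (pow2 K V).toLinearMap) (M.map (pow2 K V).toLinearMap)))

lemma key0 (z : ⨂[K]^(2+2) V) (h1 : (0:ℕ) + (2 + 2) = 4) (h2 : (2:ℕ) + 2 = 4) :
    TensorPower.cast K V h1 (TensorPower.mulEquiv ((ₜ1 : ⨂[K]^0 V) ⊗ₜ[K] z)) =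
      TensorPower.cast K V h2 z := by
  rw [← TensorPower.gMul_def]
  conv_rhs => rw [← TensorPower.one_mul (R := K) (M := V) z]
  rw [TensorPower.cast_cast]

lemma key2 (a b : ⨂[K]^2 V) (h1 : (2:ℕ) + (2 + 0) = 4) (h2 : (2:ℕ) + 2 = 4) :
    TensorPower.cast K V h1 (TensorPower.mulEquiv
      (a ⊗ₜ[K] (TensorPower.mulEquiv (b ⊗ₜ[K] (ₜ1 : ⨂[K]^0 V))))) =
      TensorPower.cast K V h2 (TensorPower.mulEquiv (a ⊗ₜ[K] b)) := by
  rw [← TensorPower.gMul_def, ← TensorPower.gMul_def, ← TensorPower.gMul_def]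
  rw [← TensorPower.mul_assoc]
  conv_rhs => rw [← TensorPower.mul_one (R := K) (M := V) (a ₜ* b)]

end GSAux

namespace GSAux

open GS TensorProduct Module

variable {K : Type*} [Field K] {V : Type*} [AddCommGroup V] [Module K V]

local notation "tone" => @GradedMonoid.GOne.one ℕ (fun i => ⨂[K]^i V) _ _

lemma TT_le_shift0 (M : Submodule K (V ⊗[K] V)) :
    TT M ≤ GS.shiftSub K V 4 M ⟨0, by norm_num⟩ := by
  rw [TT, tsub, TensorProduct.range_map_eq_span_tmul, Submodule.map_span, Submodule.map_span]
  refine Submodule.span_le.2 ?_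
  rintro x ⟨y, ⟨t, ⟨a, b, rfl⟩, rfl⟩, rfl⟩
  have h1 : ((a : ⨂[K]^2 V) ⊗ₜ[K] (b : ⨂[K]^2 V)) ∈
      tsub K (M.map (pow2 K V).toLinearMap) (⊤ : Submodule K (⨂[K]^2 V)) :=
    ⟨a ⊗ₜ[K] ⟨(b : ⨂[K]^2 V), trivial⟩, rfl⟩
  have h2 := Submodule.mem_map_of_mem (f := (TensorPower.mulEquiv (n := 2) (m := 2)).toLinearMap) h1
  have h3 : ((tone : ⨂[K]^0 V) ⊗ₜ[K]
        (TensorPower.mulEquiv ((a : ⨂[K]^2 V) ⊗ₜ[K] (b : ⨂[K]^2 V)))) ∈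
      tsub K (⊤ : Submodule K (⨂[K]^0 V))
        (Submodule.map (TensorPower.mulEquiv (n := 2) (m := 2)).toLinearMap
          (tsub K (M.map (pow2 K V).toLinearMap) (⊤ : Submodule K (⨂[K]^2 V)))) :=
    ⟨⟨tone, trivial⟩ ⊗ₜ[K] ⟨_, h2⟩, rfl⟩
  refine Submodule.mem_map.2 ⟨_, Submodule.mem_map.2 ⟨_, h3, rfl⟩, ?_⟩
  exact key0 _ _ _

lemma TT_le_shift2 (M : Submodule K (V ⊗[K] V)) :
    TT M ≤ GS.shiftSub K V 4 M ⟨2, by norm_num⟩ := by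
  rw [TT, tsub, TensorProduct.range_map_eq_span_tmul, Submodule.map_span, Submodule.map_span]
  refine Submodule.span_le.2 ?_
  rintro x ⟨y, ⟨t, ⟨a, b, rfl⟩, rfl⟩, rfl⟩
  have h1 : ((b : ⨂[K]^2 V) ⊗ₜ[K] (tone : ⨂[K]^0 V)) ∈
      tsub K (M.map (pow2 K V).toLinearMap) (⊤ : Submodule K (⨂[K]^0 V)) :=
    ⟨b ⊗ₜ[K] ⟨tone, trivial⟩, rfl⟩
  have h2 := Submodule.mem_map_of_mem (f := (TensorPower.mulEquiv (n := 2) (m := 0)).toLinearMap) h1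
  have h3 : ((a : ⨂[K]^2 V) ⊗ₜ[K]
        (TensorPower.mulEquiv ((b : ⨂[K]^2 V) ⊗ₜ[K] (tone : ⨂[K]^0 V)))) ∈
      tsub K (⊤ : Submodule K (⨂[K]^2 V))
        (Submodule.map (TensorPower.mulEquiv (n := 2) (m := 0)).toLinearMap
          (tsub K (M.map (pow2 K V).toLinearMap) (⊤ : Submodule K (⨂[K]^0 V)))) :=
    ⟨⟨(a : ⨂[K]^2 V), trivial⟩ ⊗ₜ[K] ⟨_, h2⟩, rfl⟩
  refine Submodule.mem_map.2 ⟨_, Submodule.mem_map.2 ⟨_, h3, rfl⟩, ?_⟩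
  exact key2 _ _ _ _

lemma finrank_TT [FiniteDimensional K V] (M : Submodule K (V ⊗[K] V)) :
    finrank K (TT M) = finrank K M * finrank K M := by
  rw [TT, frk_map, frk_map, finrank_tsub_eq, frk_map]

end GSAux


namespace GSAux

open GS TensorProduct Module

variable {K : Type*} [Field K]

lemma exists_submodule {W : Type*} [AddCommGroup W] [Module K W] [FiniteDimensional K W]
    {d : ℕ} (hd : d ≤ finrank K W) : ∃ p : Submodule K W, finrank K p = d := by
  classical
  let b := Module.finBasis K W
  refine ⟨Submodule.span K (Set.range (b ∘ Fin.castLE hd)), ?_⟩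
  rw [finrank_span_eq_card (b.linearIndependent.comp _ (Fin.castLE_injective hd))]
  simp

lemma arith {n d : ℕ} (hn : 1 ≤ n) (hd : (d : ℝ) ≤ (3 - Real.sqrt 5) / 2 * (n : ℝ) ^ 2) :
    3 * (d * n ^ 2) < n ^ 4 + d * d ∧ d ≤ n * n := by
  have h5 : Irrational (Real.sqrt 5) := (by norm_num : Nat.Prime 5).irrational_sqrt
  have h1 : Irrational (3 - Real.sqrt 5) := by
    have := h5.intCast_sub 3; simpa using this
  have h2 : Irrational ((3 - Real.sqrt 5) / 2) := by
    have := h1.div_intCast (m := 2) (by norm_num); simpa using this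
  have h3 : Irrational ((3 - Real.sqrt 5) / 2 * ((n ^ 2 : ℕ) : ℝ)) :=
    h2.mul_natCast (by positivity)
  have hne : (d : ℝ) ≠ (3 - Real.sqrt 5) / 2 * (n : ℝ) ^ 2 := by
    intro h
    exact h3.ne_nat d (by rw [h]; push_cast; ring)
  have hlt : (d : ℝ) < (3 - Real.sqrt 5) / 2 * (n : ℝ) ^ 2 := lt_of_le_of_ne hd hne
  have hs : Real.sqrt 5 ^ 2 = 5 := Real.sq_sqrt (by norm_num)
  have hs0 : 0 ≤ Real.sqrt 5 := Real.sqrt_nonneg 5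
  have hs3 : Real.sqrt 5 < 3 := by nlinarith
  have hnR : (1 : ℝ) ≤ (n : ℝ) := by exact_mod_cast hn
  have hd0 : (0 : ℝ) ≤ (d : ℝ) := Nat.cast_nonneg d
  constructor
  · have key : 3 * ((d : ℝ) * (n : ℝ) ^ 2) < (n : ℝ) ^ 4 + (d : ℝ) * (d : ℝ) := by
      have p1 : 0 < (3 - Real.sqrt 5) * (n : ℝ) ^ 2 - 2 * d := by linarith
      have p2 : 0 < (3 + Real.sqrt 5) * (n : ℝ) ^ 2 - 2 * d := by nlinarith
      have hs' : Real.sqrt 5 ^ 2 * (n : ℝ) ^ 4 = 5 * (n : ℝ) ^ 4 := by rw [hs]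
      nlinarith [mul_pos p1 p2, hs']
    exact_mod_cast key
  · have key : (d : ℝ) < (n : ℝ) * (n : ℝ) := by nlinarith
    have : d < n * n := by exact_mod_cast key
    exact this.le

end GSAux


set_option maxHeartbeats 1000000
set_option synthInstance.maxHeartbeats 400000

/-- For any field `K` and `n ≥ 1`, `d(K, n, 4) > (3 − √5)/2 · n²`:
if `d ≤ (3 − √5)/2 · n²`, then every quadratic `K`-algebra with `n` generators and `d`
quadratic relations has nonzero fourth graded component. -/
theorem d_four_lower_bound (K : Type*) [Field K] (n : ℕ) (hn : 1 ≤ n) (d : ℕ)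
    (hd : (d : ℝ) ≤ (3 - Real.sqrt 5) / 2 * (n : ℝ) ^ 2) :
    GS.hq K n d 4 ≠ 0 ∧
    ∀ M : Submodule K ((Fin n → K) ⊗[K] (Fin n → K)), Module.finrank K M = d →
      GS.quadDim K (Fin n → K) 4 M ≠ 0 := by
  classical
  have hfd4 : FiniteDimensional K (⨂[K]^4 (Fin n → K)) := GSAux.pow_finite (V := Fin n → K) 4
  obtain ⟨harith, hdn2⟩ := GSAux.arith hn hd
  have hfV : Module.finrank K (Fin n → K) = n := Module.finrank_fin_fun K
  have main : ∀ M : Submodule K ((Fin n → K) ⊗[K] (Fin n → K)), Module.finrank K M = d →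
      GS.quadDim K (Fin n → K) 4 M ≠ 0 := by
    intro M hM
    have hle : ∀ j : Fin (4 - 1), Module.finrank K (GS.shiftSub K (Fin n → K) 4 M j) ≤ d * n ^ 2 := by
      intro j
      refine (GSAux.finrank_shiftSub_le (V := Fin n → K) 4 M j).trans ?_
      rw [hfV, hM]
      refine le_of_eq ?_
      rw [show d * n ^ 2 = d * n ^ ((j : ℕ) + (4 - 2 - (j : ℕ))) from by
        rw [show (j : ℕ) + (4 - 2 - (j : ℕ)) = 2 from by have := j.2; omega], pow_add]
      ring
    let S0 : Submodule K (⨂[K]^4 (Fin n → K)) := GS.shiftSub K (Fin n → K) 4 M ⟨0, by norm_num⟩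
    let S1 : Submodule K (⨂[K]^4 (Fin n → K)) := GS.shiftSub K (Fin n → K) 4 M ⟨1, by norm_num⟩
    let S2 : Submodule K (⨂[K]^4 (Fin n → K)) := GS.shiftSub K (Fin n → K) 4 M ⟨2, by norm_num⟩
    have hIle : GS.idealComp K (Fin n → K) 4 M ≤ S0 ⊔ (S1 ⊔ S2) := by
      refine iSup_le fun j => ?_
      fin_cases j
      · exact le_sup_left
      · exact le_sup_of_le_right le_sup_left
      · exact le_sup_of_le_right le_sup_right
    have e1 := Submodule.finrank_sup_add_finrank_inf_eq S0 (S1 ⊔ S2)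
    have e2 : Module.finrank K (GSAux.TT M) ≤ Module.finrank K (S0 ⊓ (S1 ⊔ S2) : Submodule K _) :=
      Submodule.finrank_mono (le_inf (GSAux.TT_le_shift0 M)
        ((GSAux.TT_le_shift2 M).trans le_sup_right))
    have e3 : Module.finrank K (S1 ⊔ S2 : Submodule K _) ≤ d * n ^ 2 + d * n ^ 2 :=
      (Submodule.finrank_add_le_finrank_add_finrank S1 S2).trans
        (add_le_add (hle _) (hle _))
    have e4 : Module.finrank K (GS.idealComp K (Fin n → K) 4 M) ≤
        Module.finrank K (S0 ⊔ (S1 ⊔ S2) : Submodule K _) := Submodule.finrank_mono hIle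
    have eT : Module.finrank K (GSAux.TT M) = d * d := by rw [GSAux.finrank_TT, hM]
    have htot : Module.finrank K (⨂[K]^4 (Fin n → K)) = n ^ 4 := by rw [GSAux.finrank_pow, hfV]
    have hchain : Module.finrank K (GS.idealComp K (Fin n → K) 4 M) + d * d ≤ 3 * (d * n ^ 2) := by
      calc Module.finrank K (GS.idealComp K (Fin n → K) 4 M) + d * d
          ≤ Module.finrank K (S0 ⊔ (S1 ⊔ S2) : Submodule K _) +
            Module.finrank K (S0 ⊓ (S1 ⊔ S2) : Submodule K _) := add_le_add e4 (eT ▸ e2)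
        _ = Module.finrank K S0 + Module.finrank K (S1 ⊔ S2 : Submodule K _) := e1
        _ ≤ d * n ^ 2 + (d * n ^ 2 + d * n ^ 2) := add_le_add (hle _) e3
        _ = 3 * (d * n ^ 2) := by ring
    have hIlt : Module.finrank K (GS.idealComp K (Fin n → K) 4 M) < n ^ 4 := by
      have h' : Module.finrank K (GS.idealComp K (Fin n → K) 4 M) + d * d < n ^ 4 + d * d :=
        lt_of_le_of_lt hchain harith
      exact Nat.lt_of_add_lt_add_right h'
    intro h0
    have hq := Submodule.finrank_quotient_add_finrank (GS.idealComp K (Fin n → K) 4 M)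
    rw [GS.quadDim] at h0
    rw [h0, zero_add, htot] at hq
    rw [hq] at hIlt
    exact lt_irrefl _ hIlt
  refine ⟨?_, main⟩
  have hd2 : d ≤ Module.finrank K ((Fin n → K) ⊗[K] (Fin n → K)) := by
    rw [Module.finrank_tensorProduct, hfV]; exact hdn2
  obtain ⟨M₀, hM₀⟩ := GSAux.exists_submodule hd2
  have hne : {h | ∃ M : Submodule K ((Fin n → K) ⊗[K] (Fin n → K)),
      Module.finrank K M = d ∧ GS.quadDim K (Fin n → K) 4 M = h}.Nonempty := ⟨_, M₀, hM₀, rfl⟩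
  intro h0
  obtain ⟨M, hM, hqd⟩ := Nat.sInf_mem hne
  exact main M hM (by rw [hqd]; rw [GS.hq] at h0; exact h0)
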